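/- The constant 1/2^d in the cube (ℓ∞) local-to-global theorem is optimal: in ℝ^d with the supremum norm, let R = {−1, 1}^d be the set of the 2^d sign vectors and B = {0}. Then for every p ∈ R, the closed ℓ∞-ball of radius 1 centered at p contains the origin and contains no point of R other than p itself; hence |B ∩ K_p| ≥ |R ∩ K_p| for every p ∈ R while |B| = |R|/2^d. -/
import Mathlib


/-- Optimality of the constant `1/2^d` for the sup norm on `ℝ^d`: the set `R`
of the `2^d` sign vectors is such that each closed ℓ∞-ball of radius 1 centered
at a point of `R` contains the origin and no point of `R` other than its
center. -/
theorem stmt_5 (d : ℕ) :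
    ({x : Fin d → ℝ | ∀ i, x i = 1 ∨ x i = -1}).ncard = 2 ^ d ∧
    ∀ p ∈ {x : Fin d → ℝ | ∀ i, x i = 1 ∨ x i = -1},
      dist (0 : Fin d → ℝ) p ≤ 1 ∧
      ∀ q ∈ {x : Fin d → ℝ | ∀ i, x i = 1 ∨ x i = -1},
        dist q p ≤ 1 → q = p := by
  constructor
  · have hset : {x : Fin d → ℝ | ∀ i, x i = 1 ∨ x i = -1} =
        Set.range (fun (b : Fin d → Bool) i => if b i then (1 : ℝ) else -1) := by
      ext x
      constructor
      · intro hx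
        refine ⟨fun i => if x i = 1 then true else false, ?_⟩
        ext i
        rcases hx i with h | h <;> simp [h] <;> norm_num
      · rintro ⟨b, rfl⟩ i
        by_cases h : b i <;> simp [h]
    have hinj : Function.Injective (fun (b : Fin d → Bool) i => if b i then (1 : ℝ) else -1) := by
      intro a b hab
      ext i
      have := congrFun hab i
      simp only at this
      by_cases ha : a i <;> by_cases hb : b i
      · rw [ha, hb]
      · exfalso; rw [if_pos ha, if_neg hb] at this; norm_num at this
      · exfalso; rw [if_neg ha, if_pos hb] at this; norm_num at this
      · rw [Bool.not_eq_true] at ha hb; rw [ha, hb]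
    rw [hset, ← Nat.card_coe_set_eq, Nat.card_range_of_injective hinj]
    simp [Nat.card_eq_fintype_card]
  · intro p hp
    constructor
    · rw [dist_pi_le_iff zero_le_one]
      intro i
      rcases hp i with h | h <;> simp [Real.dist_eq, h]
    · intro q hq hdq
      ext i
      by_contra hne
      have h1 : dist (q i) (p i) ≤ 1 := le_trans (dist_le_pi_dist q p i) hdq
      rcases hq i with h | h <;> rcases hp i with h' | h' <;>
        simp_all [Real.dist_eq] <;> norm_num at h1
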